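/- Let r, n : ℤ² → ℝ³ and a, b, s : ℤ² → ℝ satisfy the discrete Lelieuvre relations Δ_n r(m,n) = n(m,n) × ( a(m−1,n)·n(m−1,n) + s(m−1,n)·n(m−1,n+1) ) and Δ_m r(m,n) = −n(m,n) × ( b(m,n−1)·n(m,n−1) + s(m,n−1)·n(m+1,n−1) ) for all (m,n). Then for all (m,n), with V(m,n) = det(n(m,n), n(m+1,n), n(m,n+1)): Δ_m r(m,n+1) × Δ_n r(m+1,n) = V(m,n)·( a(m,n)b(m,n)·n(m,n) + a(m,n)s(m,n)·n(m+1,n) + b(m,n)s(m,n)·n(m,n+1) ). In particular, if V(m,n) ≠ 0, the upper triangle at (m,n) is nondegenerate (Δ_m r(m,n+1) × Δ_n r(m+1,n) ≠ 0) if and only if at least one of the products a(m,n)b(m,n), a(m,n)s(m,n), b(m,n)s(m,n) is nonzero. -/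

import Mathlib

open Matrix

/-- Determinant of the 3×3 matrix with rows `u`, `v`, `w`. -/
noncomputable def det3 (u v w : Fin 3 → ℝ) : ℝ :=
  (Matrix.of ![u, v, w]).det

lemma lin_indep_of_det3 {u v w : Fin 3 → ℝ} (h : det3 u v w ≠ 0)
    {c1 c2 c3 : ℝ} (hc : c1 • u + c2 • v + c3 • w = 0) : c1 = 0 ∧ c2 = 0 ∧ c3 = 0 := by
  set M : Matrix (Fin 3) (Fin 3) ℝ := Matrix.of ![u, v, w] with hM
  have hdet : M.det ≠ 0 := h
  have hvm : Matrix.vecMul ![c1, c2, c3] M = 0 := by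
    funext j
    have := congrFun hc j
    simp [Matrix.vecMul, dotProduct, Fin.sum_univ_three, hM] at this ⊢
    linarith
  have hinv : Matrix.vecMul ![c1, c2, c3] (M * M⁻¹) = 0 := by
    rw [← Matrix.vecMul_vecMul, hvm]
    simp [Matrix.vecMul]
  rw [Matrix.mul_nonsing_inv M hdet.isUnit, Matrix.vecMul_one] at hinv
  refine ⟨congrFun hinv 0, congrFun hinv 1, congrFun hinv 2⟩

theorem upper_triangle_cross_product
    (r n : ℤ → ℤ → (Fin 3 → ℝ)) (a b s : ℤ → ℤ → ℝ)
    (hLel : ∀ m k : ℤ,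
      r m (k + 1) - r m k
        = n m k ⨯₃ (a (m - 1) k • n (m - 1) k + s (m - 1) k • n (m - 1) (k + 1)) ∧
      r (m + 1) k - r m k
        = -(n m k ⨯₃ (b m (k - 1) • n m (k - 1) + s m (k - 1) • n (m + 1) (k - 1)))) :
    ∀ m k : ℤ,
      ((r (m + 1) (k + 1) - r m (k + 1)) ⨯₃ (r (m + 1) (k + 1) - r (m + 1) k)
        = det3 (n m k) (n (m + 1) k) (n m (k + 1)) •
            ((a m k * b m k) • n m k + (a m k * s m k) • n (m + 1) k
              + (b m k * s m k) • n m (k + 1))) ∧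
      (det3 (n m k) (n (m + 1) k) (n m (k + 1)) ≠ 0 →
        ((r (m + 1) (k + 1) - r m (k + 1)) ⨯₃ (r (m + 1) (k + 1) - r (m + 1) k) ≠ 0 ↔
          (a m k * b m k ≠ 0 ∨ a m k * s m k ≠ 0 ∨ b m k * s m k ≠ 0))) := by
  intro m k
  have hA := (hLel (m + 1) k).1
  have hB := (hLel m (k + 1)).2
  simp only [add_sub_cancel_right] at hA hB
  have key : (r (m + 1) (k + 1) - r m (k + 1)) ⨯₃ (r (m + 1) (k + 1) - r (m + 1) k)
      = det3 (n m k) (n (m + 1) k) (n m (k + 1)) •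
          ((a m k * b m k) • n m k + (a m k * s m k) • n (m + 1) k
            + (b m k * s m k) • n m (k + 1)) := by
    rw [hB, hA]
    funext i
    fin_cases i <;>
      simp [cross_apply, det3, Matrix.det_fin_three] <;> ring
  refine ⟨key, fun hV => ?_⟩
  rw [key]
  rw [smul_ne_zero_iff]; simp only [ne_eq, hV, not_false_eq_true, true_and]
  constructor
  · intro hw
    by_contra hcon
    push_neg at hcon
    obtain ⟨h1, h2, h3⟩ := hcon
    apply hw
    simp [h1, h2, h3]
  · intro hcoef hw
    obtain ⟨e1, e2, e3⟩ := lin_indep_of_det3 hV hw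
    rcases hcoef with h | h | h
    · exact h e1
    · exact h e2
    · exact h e3
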